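/- arXiv:2009.14337 — 5 statements merged into one kernel-verified Lean document; each statement's English description precedes it below -/
import Mathlib

section
/- In the random-feature setting, let ε > 0 and δ ∈ (0,1). If K ≥ max(2·ln(1/δ), 1) · C²·N²/ε², then with probability at least 1 − δ over an i.i.d. sample (g_1,…,g_K) drawn from φ*, one has Δ_K(g_1,…,g_K) = sqrt(Σ_{x∈T} χ(x)·(f2(x) − f1(x))²) ≤ 2ε. -/
open MeasureTheory

/-- The random-feature approximation `f2`: the importance-weighted average of the
features `f (gs i)` over a sample `gs : Fin K → Ψ`. -/
noncomputable def featAvg {T Ψ : Type*} (φs φ1 : PMF Ψ) (f : Ψ → T → ℝ)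
    {K : ℕ} (gs : Fin K → Ψ) (x : T) : ℝ :=
  (1 / (K : ℝ)) * ∑ i, ((φ1 (gs i)).toReal / (φs (gs i)).toReal) * f (gs i) x

/-- The target function `f1 x = Σ_g φ1(g) · f_g(x)`. -/
noncomputable def featExp {T Ψ : Type*} (φ1 : PMF Ψ) (f : Ψ → T → ℝ) (x : T) : ℝ :=
  ∑' g, (φ1 g).toReal * f g x

/-- `Δ_K(g_1,…,g_K) = sqrt(Σ_{x∈T} χ(x)·(f2(x) − f1(x))²)`, the `‖·‖_χ` distance
between the random-feature approximation and the target. -/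
noncomputable def deltaK {T Ψ : Type*} [Fintype T] (χ : T → ℝ) (φs φ1 : PMF Ψ)
    (f : Ψ → T → ℝ) {K : ℕ} (gs : Fin K → Ψ) : ℝ :=
  Real.sqrt (∑ x, χ x * (featAvg φs φ1 f gs x - featExp φ1 f x) ^ 2)

lemma aux_integrable {α : Type*} [MeasurableSpace α] [Countable α] [DiscreteMeasurableSpace α]
    {μ : Measure α} [IsFiniteMeasure μ] (F : α → ℝ) {B : ℝ} (hb : ∀ a, |F a| ≤ B) :
    Integrable F μ :=
  (integrable_const B).mono' Measurable.of_discrete.aestronglyMeasurable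
    (Filter.Eventually.of_forall fun a => by simpa [Real.norm_eq_abs] using hb a)

lemma aux_hoeffding {Ω : Type*} [MeasurableSpace Ω] [Countable Ω] [DiscreteMeasurableSpace Ω]
    (p : Measure Ω) [IsProbabilityMeasure p] (h : Ω → ℝ) (L t : ℝ) (hL : 0 < L)
    (hb : ∀ ω, |h ω| ≤ L) (h0 : ∫ ω, h ω ∂p = 0) :
    ∫ ω, Real.exp (t * h ω) ∂p ≤ Real.exp (t ^ 2 * L ^ 2 / 2) := by
  have hint : Integrable h p := aux_integrable h hb
  have key : ∀ ω, Real.exp (t * h ω) ≤ Real.cosh (t*L) + (h ω / L) * Real.sinh (t*L) := by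
    intro ω
    have h1 : -L ≤ h ω := neg_le_of_abs_le (hb ω)
    have h2 : h ω ≤ L := le_of_abs_le (hb ω)
    have ha : 0 ≤ (L + h ω) / (2*L) := div_nonneg (by linarith) (by linarith)
    have hb' : 0 ≤ (L - h ω) / (2*L) := by
      apply div_nonneg (by linarith) (by linarith)
    have hab : (L + h ω) / (2*L) + (L - h ω) / (2*L) = 1 := by
      field_simp
      ring
    have hconv := convexOn_exp.2 (Set.mem_univ (t*L)) (Set.mem_univ (-(t*L))) ha hb' hab
    simp only [smul_eq_mul] at hconv
    have hL' : L ≠ 0 := ne_of_gt hL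
    have heq : (L + h ω) / (2*L) * (t*L) + (L - h ω) / (2*L) * (-(t*L)) = t * h ω := by
      field_simp
      ring
    rw [heq] at hconv
    refine hconv.trans (le_of_eq ?_)
    rw [Real.cosh_eq, Real.sinh_eq]
    field_simp
    ring
  have hrhs_int : Integrable (fun ω => Real.cosh (t*L) + (h ω / L) * Real.sinh (t*L)) p :=
    (integrable_const _).add ((hint.div_const L).mul_const _)
  have hlhs_int : Integrable (fun ω => Real.exp (t * h ω)) p := by
    refine aux_integrable _ (B := Real.exp (|t| * L)) fun ω => ?_
    rw [abs_of_nonneg (Real.exp_nonneg _)]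
    apply Real.exp_le_exp.2
    calc t * h ω ≤ |t * h ω| := le_abs_self _
    _ = |t| * |h ω| := abs_mul _ _
    _ ≤ |t| * L := by
        exact mul_le_mul_of_nonneg_left (hb ω) (abs_nonneg t)
  calc ∫ ω, Real.exp (t * h ω) ∂p ≤ ∫ ω, (Real.cosh (t*L) + (h ω / L) * Real.sinh (t*L)) ∂p :=
        integral_mono hlhs_int hrhs_int key
  _ = Real.cosh (t*L) := by
        rw [integral_add (integrable_const _) ((hint.div_const L).mul_const _),
          integral_const, integral_mul_const, integral_div, h0]
        simp
  _ ≤ Real.exp ((t*L)^2/2) := Real.cosh_le_exp_half_sq _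
  _ = Real.exp (t^2 * L^2 / 2) := by rw [mul_pow]

/-- Splitting an integral over `Fin (K+1) → Ω` into coordinates `0` and the rest. -/
lemma aux_split {Ω : Type*} [MeasurableSpace Ω] [Countable Ω] [DiscreteMeasurableSpace Ω]
    (p : Measure Ω) [IsProbabilityMeasure p] (K : ℕ) (H : (Fin (K+1) → Ω) → ℝ) (D : ℝ)
    (hD : ∀ gs, |H gs| ≤ D) :
    ∫ gs, H gs ∂(Measure.pi fun _ : Fin (K+1) => p) =
      ∫ y, ∫ a, H (Fin.cons a y) ∂p ∂(Measure.pi fun _ : Fin K => p) := by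
  have mp := measurePreserving_piFinSuccAbove (fun _ : Fin (K+1) => p) 0
  set e := MeasurableEquiv.piFinSuccAbove (fun _ : Fin (K+1) => Ω) 0 with he
  have hsymm : ∀ z : Ω × (Fin K → Ω), e.symm z = Fin.cons z.1 z.2 := by
    rintro ⟨a, y⟩
    funext j
    induction j using Fin.cases with
    | zero => simp [he, MeasurableEquiv.piFinSuccAbove, Fin.insertNthEquiv]
    | succ i => simp [he, MeasurableEquiv.piFinSuccAbove, Fin.insertNthEquiv, Fin.cons_succ]
  have h1 : ∫ gs, H gs ∂(Measure.pi fun _ : Fin (K+1) => p) =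
      ∫ z, H (e.symm z) ∂((p.prod (Measure.pi fun _ : Fin K => p))) := by
    exact (MeasurePreserving.integral_comp (mp.symm e) e.symm.measurableEmbedding H).symm
  rw [h1]
  have hint : Integrable (fun z : Ω × (Fin K → Ω) => H (e.symm z))
      (p.prod (Measure.pi fun _ : Fin K => p)) :=
    aux_integrable _ (B := D) fun z => hD _
  rw [integral_prod_symm _ hint]
  simp_rw [hsymm]

/-- McDiarmid-type bound on the moment generating function, via induction on the
number of coordinates. -/
lemma aux_mcdiarmid {Ω : Type*} [MeasurableSpace Ω] [Countable Ω] [DiscreteMeasurableSpace Ω]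
    (p : Measure Ω) [IsProbabilityMeasure p] (c t B : ℝ) (hc : 0 < c) (ht : 0 ≤ t) :
    ∀ (K : ℕ) (F : (Fin K → Ω) → ℝ), (∀ gs, |F gs| ≤ B) →
    (∀ (gs : Fin K → Ω) (i : Fin K) (g' : Ω), |F gs - F (Function.update gs i g')| ≤ c) →
    ∫ gs, Real.exp (t * F gs) ∂(Measure.pi fun _ : Fin K => p) ≤
      Real.exp (t * ∫ gs, F gs ∂(Measure.pi fun _ : Fin K => p) + t^2 * K * c^2 / 2) := by
  intro K
  induction K with
  | zero =>
    intro F hB hdiff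
    have hFc : ∀ gs : Fin 0 → Ω, F gs = F default := fun gs => by
      rw [Subsingleton.elim gs default]
    simp only [hFc]
    rw [integral_const, integral_const]
    simp [measure_univ]
  | succ K IH =>
    intro F hB hdiff
    set μK := Measure.pi fun _ : Fin K => p with hμK
    set G : (Fin K → Ω) → ℝ := fun y => ∫ a, F (Fin.cons a y) ∂p with hG
    have hFint : ∀ y : Fin K → Ω, Integrable (fun a => F (Fin.cons a y)) p :=
      fun y => aux_integrable _ (fun a => hB _)
    have hGB : ∀ y, |G y| ≤ B := by
      intro y
      rw [← Real.norm_eq_abs]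
      calc ‖G y‖ ≤ B * (p Set.univ).toReal :=
        norm_integral_le_of_norm_le_const (Filter.Eventually.of_forall fun a => by
          simpa [Real.norm_eq_abs] using hB (Fin.cons a y))
      _ = B := by simp [measure_univ]
    have hGdiff : ∀ (y : Fin K → Ω) (i : Fin K) (g' : Ω), |G y - G (Function.update y i g')| ≤ c := by
      intro y i g'
      have : G y - G (Function.update y i g') =
          ∫ a, (F (Fin.cons a y) - F (Fin.cons a (Function.update y i g'))) ∂p := by
        rw [integral_sub (hFint y) (hFint _)]
      rw [this, ← Real.norm_eq_abs]
      calc ‖∫ a, (F (Fin.cons a y) - F (Fin.cons a (Function.update y i g'))) ∂p‖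
          ≤ c * (p Set.univ).toReal := by
            refine norm_integral_le_of_norm_le_const (Filter.Eventually.of_forall fun a => ?_)
            rw [Real.norm_eq_abs]
            have := hdiff (Fin.cons a y) i.succ g'
            rwa [← Fin.cons_update] at this
      _ = c := by simp [measure_univ]
    -- mean identity
    have hGmean : ∫ y, G y ∂μK = ∫ gs, F gs ∂(Measure.pi fun _ : Fin (K+1) => p) :=
      (aux_split p K F B hB).symm
    -- pointwise conditional Hoeffding bound
    have hcond : ∀ y : Fin K → Ω,
        ∫ a, Real.exp (t * F (Fin.cons a y)) ∂p ≤ Real.exp (t * G y + t^2 * c^2 / 2) := by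
      intro y
      have h0 : ∫ a, (F (Fin.cons a y) - G y) ∂p = 0 := by
        rw [integral_sub (hFint y) (integrable_const _), integral_const]
        simp [measure_univ, hG]
      have hb : ∀ a, |F (Fin.cons a y) - G y| ≤ c := by
        intro a
        have : F (Fin.cons a y) - G y =
            ∫ a', (F (Fin.cons a y) - F (Fin.cons a' y)) ∂p := by
          rw [integral_sub (integrable_const _) (hFint y), integral_const]
          simp [measure_univ, hG]
        rw [this, ← Real.norm_eq_abs]
        calc ‖∫ a', (F (Fin.cons a y) - F (Fin.cons a' y)) ∂p‖ ≤ c * (p Set.univ).toReal := by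
              refine norm_integral_le_of_norm_le_const (Filter.Eventually.of_forall fun a' => ?_)
              rw [Real.norm_eq_abs]
              have := hdiff (Fin.cons a y) 0 a'
              rwa [Fin.update_cons_zero] at this
        _ = c := by simp [measure_univ]
      have hh := aux_hoeffding p (fun a => F (Fin.cons a y) - G y) c t hc hb h0
      have : ∀ a, Real.exp (t * F (Fin.cons a y)) =
          Real.exp (t * G y) * Real.exp (t * (F (Fin.cons a y) - G y)) := by
        intro a
        rw [← Real.exp_add]
        ring_nf
      simp only [this]
      rw [integral_const_mul]
      calc Real.exp (t * G y) * ∫ a, Real.exp (t * (F (Fin.cons a y) - G y)) ∂p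
          ≤ Real.exp (t * G y) * Real.exp (t^2 * c^2 / 2) := by
            exact mul_le_mul_of_nonneg_left hh (Real.exp_nonneg _)
      _ = Real.exp (t * G y + t^2 * c^2 / 2) := by rw [← Real.exp_add]
    -- put everything together
    have hsplit : ∫ gs, Real.exp (t * F gs) ∂(Measure.pi fun _ : Fin (K+1) => p) =
        ∫ y, (∫ a, Real.exp (t * F (Fin.cons a y)) ∂p) ∂μK := by
      refine aux_split p K _ (Real.exp (|t| * B)) fun gs => ?_
      rw [abs_of_nonneg (Real.exp_nonneg _)]
      apply Real.exp_le_exp.2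
      calc t * F gs ≤ |t * F gs| := le_abs_self _
      _ = |t| * |F gs| := abs_mul _ _
      _ ≤ |t| * B := mul_le_mul_of_nonneg_left (hB gs) (abs_nonneg t)
    rw [hsplit]
    have hIH := IH G hGB hGdiff
    have hint1 : Integrable (fun y => ∫ a, Real.exp (t * F (Fin.cons a y)) ∂p) μK := by
      refine aux_integrable _ (B := Real.exp (|t| * B)) fun y => ?_
      rw [← Real.norm_eq_abs]
      calc ‖∫ a, Real.exp (t * F (Fin.cons a y)) ∂p‖ ≤ Real.exp (|t| * B) * (p Set.univ).toReal := by
            refine norm_integral_le_of_norm_le_const (Filter.Eventually.of_forall fun a => ?_)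
            rw [Real.norm_eq_abs, abs_of_nonneg (Real.exp_nonneg _)]
            apply Real.exp_le_exp.2
            calc t * F (Fin.cons a y) ≤ |t * F (Fin.cons a y)| := le_abs_self _
            _ = |t| * |F (Fin.cons a y)| := abs_mul _ _
            _ ≤ |t| * B := mul_le_mul_of_nonneg_left (hB _) (abs_nonneg t)
      _ = Real.exp (|t| * B) := by simp [measure_univ]
    have hint2 : Integrable (fun y => Real.exp (t * G y + t^2 * c^2 / 2)) μK := by
      refine aux_integrable _ (B := Real.exp (|t| * B + t^2 * c^2 / 2)) fun y => ?_
      rw [abs_of_nonneg (Real.exp_nonneg _)]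
      apply Real.exp_le_exp.2
      have : t * G y ≤ |t| * B := by
        calc t * G y ≤ |t * G y| := le_abs_self _
        _ = |t| * |G y| := abs_mul _ _
        _ ≤ |t| * B := mul_le_mul_of_nonneg_left (hGB _) (abs_nonneg t)
      linarith
    calc ∫ y, (∫ a, Real.exp (t * F (Fin.cons a y)) ∂p) ∂μK
        ≤ ∫ y, Real.exp (t * G y + t^2 * c^2 / 2) ∂μK := integral_mono hint1 hint2 hcond
    _ = (∫ y, Real.exp (t * G y) ∂μK) * Real.exp (t^2 * c^2 / 2) := by
        simp_rw [Real.exp_add]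
        rw [integral_mul_const]
    _ ≤ Real.exp (t * ∫ y, G y ∂μK + t^2 * K * c^2 / 2) * Real.exp (t^2 * c^2 / 2) :=
        mul_le_mul_of_nonneg_right hIH (Real.exp_nonneg _)
    _ = Real.exp (t * ∫ gs, F gs ∂(Measure.pi fun _ : Fin (K+1) => p) + t^2 * (K+1 : ℕ) * c^2 / 2) := by
        rw [← Real.exp_add, hGmean]
        push_cast
        ring_nf

lemma aux_pmf_integral {Ω : Type*} [MeasurableSpace Ω] [Countable Ω] [DiscreteMeasurableSpace Ω]
    (φ : PMF Ω) (u : Ω → ℝ) {B : ℝ} (hb : ∀ g, |u g| ≤ B) :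
    ∫ g, u g ∂φ.toMeasure = ∑' g, (φ g).toReal * u g := by
  rw [integral_countable' (aux_integrable u hb)]
  simp only [measureReal_def, PMF.toMeasure_apply_singleton _ _ (measurableSet_singleton _), smul_eq_mul]

/-- Second moment bound for sums of i.i.d. bounded centered vectors, weighted norm version. -/
lemma aux_moment {Ω T : Type*} [MeasurableSpace Ω] [Countable Ω] [DiscreteMeasurableSpace Ω]
    [Fintype T] (p : Measure Ω) [IsProbabilityMeasure p] (χ : T → ℝ) (hχ0 : ∀ x, 0 ≤ χ x)
    (hχ1 : ∑ x, χ x = 1) (Y : Ω → T → ℝ) (m : T → ℝ) (L : ℝ) (hL : 0 ≤ L)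
    (hbd : ∀ g x, |Y g x - m x| ≤ L) (hmean : ∀ x, ∫ g, Y g x ∂p = m x) :
    ∀ K : ℕ, ∫ gs, (∑ x, χ x * ((∑ i, Y (gs i) x) - K * m x)^2)
        ∂(Measure.pi fun _ : Fin K => p) ≤ K * L^2 := by
  -- helper: rewrite the centered sum
  have hS : ∀ (K : ℕ) (gs : Fin K → Ω) (x : T),
      (∑ i, Y (gs i) x) - (K : ℝ) * m x = ∑ i, (Y (gs i) x - m x) := by
    intro K gs x
    rw [Finset.sum_sub_distrib, Finset.sum_const, Finset.card_univ, Fintype.card_fin,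
      nsmul_eq_mul]
  have hSbd : ∀ (K : ℕ) (gs : Fin K → Ω) (x : T),
      |(∑ i, Y (gs i) x) - (K : ℝ) * m x| ≤ K * L := by
    intro K gs x
    rw [hS]
    calc |∑ i, (Y (gs i) x - m x)| ≤ ∑ i, |Y (gs i) x - m x| := Finset.abs_sum_le_sum_abs _ _
    _ ≤ ∑ _i : Fin K, L := Finset.sum_le_sum fun i _ => hbd _ _
    _ = K * L := by rw [Finset.sum_const, Finset.card_univ, Fintype.card_fin, nsmul_eq_mul]
  have hwbd : ∀ (v : T → ℝ) (D : ℝ), 0 ≤ D → (∀ x, |v x| ≤ D) →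
      |∑ x, χ x * (v x)^2| ≤ D^2 := by
    intro v D hD hv
    have h1 : ∀ x ∈ Finset.univ, (0:ℝ) ≤ χ x * (v x)^2 :=
      fun x _ => mul_nonneg (hχ0 x) (sq_nonneg _)
    rw [abs_of_nonneg (Finset.sum_nonneg h1)]
    calc ∑ x, χ x * (v x)^2 ≤ ∑ x, χ x * D^2 := by
          refine Finset.sum_le_sum fun x _ => mul_le_mul_of_nonneg_left ?_ (hχ0 x)
          calc (v x)^2 = |v x|^2 := (sq_abs _).symm
          _ ≤ D^2 := pow_le_pow_left₀ (abs_nonneg _) (hv x) 2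
    _ = D^2 := by rw [← Finset.sum_mul, hχ1, one_mul]
  intro K
  induction K with
  | zero => simp
  | succ K IH =>
    set μK := Measure.pi fun _ : Fin K => p with hμK
    set S : (Fin K → Ω) → T → ℝ := fun y x => (∑ i, Y (y i) x) - K * m x with hSdef
    have hZint : ∀ x, Integrable (fun a => Y a x - m x) p :=
      fun x => aux_integrable _ (fun a => hbd a x)
    have hZ0 : ∀ x, ∫ a, (Y a x - m x) ∂p = 0 := by
      intro x
      rw [integral_sub (aux_integrable (fun a => Y a x)
          (B := L + |m x|) fun a => by have := hbd a x; have := abs_sub_abs_le_abs_sub (Y a x) (m x); rw [abs_sub_comm] at *; nlinarith [abs_nonneg (Y a x - m x), neg_abs_le (Y a x - m x), le_abs_self (Y a x)]) (integrable_const _),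
        hmean, integral_const]
      simp [measure_univ]
    have hZsq_int : ∀ x, Integrable (fun a => (Y a x - m x)^2) p := fun x =>
      aux_integrable _ (B := L^2) fun a => by
        rw [abs_of_nonneg (sq_nonneg _), ← sq_abs]
        exact pow_le_pow_left₀ (abs_nonneg _) (hbd a x) 2
    have hZSbd : ∀ (a : Ω) (y : Fin K → Ω) (x : T), |(Y a x - m x) + S y x| ≤ L + K*L := by
      intro a y x
      calc |(Y a x - m x) + S y x| ≤ |Y a x - m x| + |S y x| := abs_add_le _ _
      _ ≤ L + K*L := add_le_add (hbd a x) (hSbd K y x)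
    have hLKL : (0:ℝ) ≤ L + K*L := by positivity
    have key : ∀ y, ∫ a, (∑ x, χ x * ((Y a x - m x) + S y x)^2) ∂p
        ≤ L^2 + ∑ x, χ x * (S y x)^2 := by
      intro y
      have hterm_int : ∀ x : T, Integrable (fun a => χ x * ((Y a x - m x) + S y x)^2) p := by
        intro x
        refine aux_integrable _ (B := |χ x| * (L + K*L)^2) fun a => ?_
        rw [abs_mul]
        refine mul_le_mul_of_nonneg_left ?_ (abs_nonneg _)
        rw [abs_of_nonneg (sq_nonneg _), ← sq_abs]
        exact pow_le_pow_left₀ (abs_nonneg _) (hZSbd a y x) 2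
      rw [integral_finset_sum Finset.univ (fun x _ => hterm_int x)]
      have hx : ∀ x : T, ∫ a, χ x * ((Y a x - m x) + S y x)^2 ∂p ≤ χ x * (L^2 + (S y x)^2) := by
        intro x
        rw [integral_const_mul]
        refine mul_le_mul_of_nonneg_left ?_ (hχ0 x)
        have expand : ∀ a : Ω, ((Y a x - m x) + S y x)^2 =
            ((Y a x - m x)^2 + (2 * S y x) * (Y a x - m x)) + (S y x)^2 := fun a => by ring
        simp_rw [expand]
        have hint1 : Integrable (fun a => (Y a x - m x)^2 + 2 * S y x * (Y a x - m x)) p :=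
          (hZsq_int x).add ((hZint x).const_mul (2 * S y x))
        have hint2 : Integrable (fun a => 2 * S y x * (Y a x - m x)) p :=
          (hZint x).const_mul (2 * S y x)
        rw [integral_add hint1 (integrable_const _), integral_add (hZsq_int x) hint2,
          integral_const_mul, hZ0, integral_const]
        have hZ2 : ∫ a, (Y a x - m x)^2 ∂p ≤ L^2 := by
          calc ∫ a, (Y a x - m x)^2 ∂p ≤ ∫ _a, L^2 ∂p := by
                refine integral_mono (hZsq_int x) (integrable_const _) fun a => ?_
                rw [← sq_abs]
                exact pow_le_pow_left₀ (abs_nonneg _) (hbd a x) 2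
          _ = L^2 := by rw [integral_const]; simp [measure_univ]
        simp only [probReal_univ, smul_eq_mul, mul_zero, one_mul]
        linarith
      calc ∑ x, ∫ a, χ x * ((Y a x - m x) + S y x)^2 ∂p
          ≤ ∑ x, χ x * (L^2 + (S y x)^2) := Finset.sum_le_sum fun x _ => hx x
      _ = L^2 + ∑ x, χ x * (S y x)^2 := by
          simp_rw [mul_add]
          rw [Finset.sum_add_distrib, ← Finset.sum_mul, hχ1, one_mul]
    have hsplit := aux_split p K
      (fun gs => ∑ x, χ x * ((∑ i, Y (gs i) x) - ((K+1 : ℕ) : ℝ) * m x)^2)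
      ((((K+1 : ℕ) : ℝ) * L)^2)
      (fun gs => hwbd _ _ (by positivity) fun x => hSbd (K+1) gs x)
    rw [hsplit]
    have hcons : ∀ (a : Ω) (y : Fin K → Ω) (x : T),
        (∑ i : Fin (K+1), Y ((Fin.cons a y : Fin (K+1) → Ω) i) x) - ((K+1 : ℕ) : ℝ) * m x
          = (Y a x - m x) + S y x := by
      intro a y x
      have h1 : (∑ i : Fin (K+1), Y ((Fin.cons a y : Fin (K+1) → Ω) i) x) = Y a x + ∑ i : Fin K, Y (y i) x := by
        have : (fun i : Fin (K+1) => Y ((Fin.cons a y : Fin (K+1) → Ω) i) x)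
            = (Fin.cons (Y a x) (fun i => Y (y i) x) : Fin (K+1) → ℝ) := by
          funext j
          induction j using Fin.cases with
          | zero => simp
          | succ i => simp
        rw [this]
        exact Fin.sum_cons _ _
      rw [h1]
      simp only [hSdef]
      push_cast
      ring
    simp_rw [hcons]
    have hSsq_int : Integrable (fun y => ∑ x, χ x * (S y x)^2) μK :=
      aux_integrable _ (B := ((K:ℝ)*L)^2) fun y => hwbd _ _ (by positivity) fun x => hSbd K y x
    have hinner_int : Integrable (fun y => ∫ a, (∑ x, χ x * ((Y a x - m x) + S y x)^2) ∂p) μK := by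
      refine aux_integrable _ (B := (L + K*L)^2) fun y => ?_
      rw [← Real.norm_eq_abs]
      calc ‖∫ a, (∑ x, χ x * ((Y a x - m x) + S y x)^2) ∂p‖
          ≤ (L + K*L)^2 * (p Set.univ).toReal := by
            refine norm_integral_le_of_norm_le_const (Filter.Eventually.of_forall fun a => ?_)
            rw [Real.norm_eq_abs]
            exact hwbd _ _ hLKL fun x => hZSbd a y x
      _ = (L + K*L)^2 := by simp [measure_univ]
    calc ∫ y, (∫ a, (∑ x, χ x * ((Y a x - m x) + S y x)^2) ∂p) ∂μK
        ≤ ∫ y, (L^2 + ∑ x, χ x * (S y x)^2) ∂μK :=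
          integral_mono hinner_int ((integrable_const _).add hSsq_int) key
    _ = L^2 + ∫ y, (∑ x, χ x * (S y x)^2) ∂μK := by
        rw [integral_add (integrable_const _) hSsq_int, integral_const]
        simp [measure_univ]
    _ ≤ L^2 + K * L^2 := by
        have := IH
        simp only [hSdef] at *
        linarith
    _ = ((K+1 : ℕ) : ℝ) * L^2 := by push_cast; ring

/-- weighted norm bound -/
lemma aux_wbd {T : Type*} [Fintype T] (χ : T → ℝ) (hχ0 : ∀ x, 0 ≤ χ x)
    (hχ1 : ∑ x, χ x = 1) (v : T → ℝ) (D : ℝ) (hD : 0 ≤ D) (hv : ∀ x, |v x| ≤ D) :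
    ∑ x, χ x * (v x)^2 ≤ D^2 := by
  calc ∑ x, χ x * (v x)^2 ≤ ∑ x, χ x * D^2 := by
        refine Finset.sum_le_sum fun x _ => mul_le_mul_of_nonneg_left ?_ (hχ0 x)
        calc (v x)^2 = |v x|^2 := (sq_abs _).symm
        _ ≤ D^2 := pow_le_pow_left₀ (abs_nonneg _) (hv x) 2
  _ = D^2 := by rw [← Finset.sum_mul, hχ1, one_mul]

lemma aux_wsum_nonneg {T : Type*} [Fintype T] (χ : T → ℝ) (hχ0 : ∀ x, 0 ≤ χ x) (v : T → ℝ) :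
    0 ≤ ∑ x, χ x * (v x)^2 :=
  Finset.sum_nonneg fun x _ => mul_nonneg (hχ0 x) (sq_nonneg _)

lemma aux_wnorm_le {T : Type*} [Fintype T] (χ : T → ℝ) (hχ0 : ∀ x, 0 ≤ χ x)
    (hχ1 : ∑ x, χ x = 1) (v : T → ℝ) (D : ℝ) (hD : 0 ≤ D) (hv : ∀ x, |v x| ≤ D) :
    Real.sqrt (∑ x, χ x * (v x)^2) ≤ D := by
  calc Real.sqrt (∑ x, χ x * (v x)^2) ≤ Real.sqrt (D^2) :=
        Real.sqrt_le_sqrt (aux_wbd χ hχ0 hχ1 v D hD hv)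
  _ = D := Real.sqrt_sq hD

/-- weighted norm triangle-type inequality via `EuclideanSpace` -/
lemma aux_wtri {T : Type*} [Fintype T] (χ : T → ℝ) (hχ0 : ∀ x, 0 ≤ χ x) (u v : T → ℝ) :
    |Real.sqrt (∑ x, χ x * (u x)^2) - Real.sqrt (∑ x, χ x * (v x)^2)|
      ≤ Real.sqrt (∑ x, χ x * (u x - v x)^2) := by
  classical
  set V : (T → ℝ) → EuclideanSpace ℝ T :=
    fun w => (WithLp.equiv 2 (T → ℝ)).symm (fun x => Real.sqrt (χ x) * w x) with hV
  have hnorm : ∀ w : T → ℝ, ‖V w‖ = Real.sqrt (∑ x, χ x * (w x)^2) := by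
    intro w
    rw [EuclideanSpace.norm_eq]
    congr 1
    refine Finset.sum_congr rfl fun x _ => ?_
    rw [hV]
    simp only [WithLp.equiv_symm_apply, PiLp.toLp_apply]
    rw [Real.norm_eq_abs, sq_abs, mul_pow, Real.sq_sqrt (hχ0 x)]
  have hsub : V u - V v = V (fun x => u x - v x) := by
    rw [hV]
    ext x
    simp only [WithLp.equiv_symm_apply, PiLp.sub_apply, PiLp.toLp_apply]
    ring
  rw [← hnorm, ← hnorm, ← hnorm]
  calc |‖V u‖ - ‖V v‖| ≤ ‖V u - V v‖ := abs_norm_sub_norm_le _ _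
  _ = ‖V (fun x => u x - v x)‖ := by rw [hsub]

set_option maxHeartbeats 2000000 in
lemma aux_core {T Ψ : Type*} [Fintype T] [Countable Ψ] [MeasurableSpace Ψ]
    [DiscreteMeasurableSpace Ψ]
    (χ : T → ℝ) (hχ0 : ∀ x, 0 ≤ χ x) (hχ1 : ∑ x, χ x = 1)
    (φs φ1 : PMF Ψ) (hφs : ∀ g, 0 < φs g)
    (f : Ψ → T → ℝ) (N : ℝ) (hN : 0 < N)
    (hf0 : ∀ g x, 0 ≤ f g x) (hfN : ∀ g x, f g x ≤ N)
    (hBdd : BddAbove (Set.range fun g => (φ1 g).toReal / (φs g).toReal))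
    (C : ℝ) (hC : C = ⨆ g, (φ1 g).toReal / (φs g).toReal)
    (K : ℕ) (ε δ : ℝ) (hε : 0 < ε) (hδ : δ ∈ Set.Ioo (0 : ℝ) 1)
    (hK : max (2 * Real.log (1 / δ)) 1 * C ^ 2 * N ^ 2 / ε ^ 2 ≤ (K : ℝ)) :
    (Measure.pi fun _ : Fin K => φs.toMeasure) {gs | ¬ deltaK χ φs φ1 f gs ≤ 2 * ε}
      ≤ ENNReal.ofReal δ := by
  classical
  obtain ⟨hδ0, hδ1⟩ := hδ
  set p := φs.toMeasure with hp
  set μ := Measure.pi fun _ : Fin K => p with hμ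
  -- basic positivity facts
  have hφsR : ∀ g, 0 < (φs g).toReal :=
    fun g => ENNReal.toReal_pos (hφs g).ne' (PMF.apply_ne_top _ _)
  set r : Ψ → ℝ := fun g => (φ1 g).toReal / (φs g).toReal with hr
  have hr0 : ∀ g, 0 ≤ r g := fun g => div_nonneg ENNReal.toReal_nonneg (hφsR g).le
  have hrC : ∀ g, r g ≤ C := fun g => hC ▸ le_ciSup hBdd g
  have hsum1 : ∑' g, (φ1 g).toReal = 1 := by
    rw [← ENNReal.tsum_toReal_eq (fun g => PMF.apply_ne_top _ _), PMF.tsum_coe,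
      ENNReal.toReal_one]
  have hsums : Summable (fun g => (φs g).toReal) :=
    ENNReal.summable_toReal (by rw [PMF.tsum_coe]; exact ENNReal.one_ne_top)
  have hsum1s : ∑' g, (φs g).toReal = 1 := by
    rw [← ENNReal.tsum_toReal_eq (fun g => PMF.apply_ne_top _ _), PMF.tsum_coe,
      ENNReal.toReal_one]
  have hsumm1 : Summable (fun g => (φ1 g).toReal) :=
    ENNReal.summable_toReal (by rw [PMF.tsum_coe]; exact ENNReal.one_ne_top)
  have hC1 : 1 ≤ C := by
    have heq : ∀ g, (φ1 g).toReal = (φs g).toReal * r g := by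
      intro g
      rw [hr, mul_comm, div_mul_cancel₀ _ (hφsR g).ne']
    calc (1:ℝ) = ∑' g, (φ1 g).toReal := hsum1.symm
    _ = ∑' g, (φs g).toReal * r g := tsum_congr heq
    _ ≤ ∑' g, (φs g).toReal * C := by
        refine Summable.tsum_le_tsum (fun g => mul_le_mul_of_nonneg_left (hrC g) ENNReal.toReal_nonneg)
          ?_ (hsums.mul_right C)
        refine (summable_congr fun g => (heq g).symm).2 hsumm1
    _ = C := by rw [tsum_mul_right, hsum1s, one_mul]
  have hC0 : 0 < C := lt_of_lt_of_le one_pos hC1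
  have hCN : 0 < C * N := mul_pos hC0 hN
  -- K ≥ 1
  have hCN2ε : 0 < C^2 * N^2 / ε^2 := by positivity
  have hKR : C^2 * N^2 / ε^2 ≤ (K:ℝ) := by
    calc C^2 * N^2 / ε^2 = 1 * C^2 * N^2 / ε^2 := by ring
    _ ≤ max (2 * Real.log (1 / δ)) 1 * C ^ 2 * N ^ 2 / ε ^ 2 := by
        gcongr
        exact le_max_right _ _
    _ ≤ (K:ℝ) := hK
  have hKpos : 0 < (K:ℝ) := lt_of_lt_of_le hCN2ε hKR
  have hKne : (K:ℝ) ≠ 0 := hKpos.ne'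
  -- the basic random variables
  set Y : Ψ → T → ℝ := fun g x => r g * f g x with hY
  have hY0 : ∀ g x, 0 ≤ Y g x := fun g x => mul_nonneg (hr0 g) (hf0 g x)
  have hYCN : ∀ g x, Y g x ≤ C * N := fun g x =>
    mul_le_mul (hrC g) (hfN g x) (hf0 g x) hC0.le
  set f1 : T → ℝ := featExp φ1 f with hf1
  have hf1_0 : ∀ x, 0 ≤ f1 x := by
    intro x
    exact tsum_nonneg fun g => mul_nonneg ENNReal.toReal_nonneg (hf0 g x)
  have hsummf : ∀ x, Summable (fun g => (φ1 g).toReal * f g x) := by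
    intro x
    refine Summable.of_nonneg_of_le (fun g => mul_nonneg ENNReal.toReal_nonneg (hf0 g x))
      (fun g => mul_le_mul_of_nonneg_left (hfN g x) ENNReal.toReal_nonneg)
      (hsumm1.mul_right N)
  have hf1N : ∀ x, f1 x ≤ N := by
    intro x
    have h1 : (∑' g, (φ1 g).toReal * f g x) ≤ ∑' g, (φ1 g).toReal * N :=
      Summable.tsum_le_tsum (fun g => mul_le_mul_of_nonneg_left (hfN g x) ENNReal.toReal_nonneg)
        (hsummf x) (hsumm1.mul_right N)
    have h2 : (∑' g, (φ1 g).toReal * N) = N := by rw [tsum_mul_right, hsum1, one_mul]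
    exact le_of_le_of_eq h1 h2
  have hbd : ∀ g x, |Y g x - f1 x| ≤ C * N := by
    intro g x
    rw [abs_sub_le_iff]
    constructor
    · have := hf1_0 x; have := hYCN g x; linarith
    · have := hY0 g x
      have h1 := hf1N x
      have h2 : N ≤ C * N := by nlinarith
      linarith
  have hmean : ∀ x, ∫ g, Y g x ∂p = f1 x := by
    intro x
    rw [hp, aux_pmf_integral φs (fun g => Y g x) (B := C*N) (fun g => by
      rw [abs_of_nonneg (hY0 g x)]; exact hYCN g x)]
    refine tsum_congr fun g => ?_
    rw [hY, hr]
    field_simp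
    rw [mul_assoc]
    exact mul_div_cancel_left₀ _ (hφsR g).ne'
  -- the function F = deltaK and its properties
  set F : (Fin K → Ψ) → ℝ := deltaK χ φs φ1 f with hF
  have hFeq : ∀ gs, F gs = Real.sqrt (∑ x, χ x * (featAvg φs φ1 f gs x - f1 x)^2) := fun gs => rfl
  have hAvg : ∀ (gs : Fin K → Ψ) (x : T),
      featAvg φs φ1 f gs x = (1/(K:ℝ)) * ∑ i, Y (gs i) x := fun gs x => rfl
  have hAvgmem : ∀ (gs : Fin K → Ψ) (x : T), 0 ≤ featAvg φs φ1 f gs x ∧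
      featAvg φs φ1 f gs x ≤ C * N := by
    intro gs x
    rw [hAvg]
    constructor
    · exact mul_nonneg (by positivity) (Finset.sum_nonneg fun i _ => hY0 _ _)
    · have hsum : ∑ i, Y (gs i) x ≤ ∑ _i : Fin K, (C*N) :=
        Finset.sum_le_sum fun i _ => hYCN _ _
      have h2 : (1/(K:ℝ)) * ∑ _i : Fin K, (C*N) = C * N := by
        rw [Finset.sum_const, Finset.card_univ, Fintype.card_fin, nsmul_eq_mul, one_div,
          inv_mul_cancel_left₀ hKne]
      calc (1/(K:ℝ)) * ∑ i, Y (gs i) x ≤ (1/(K:ℝ)) * ∑ _i : Fin K, (C*N) :=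
            mul_le_mul_of_nonneg_left hsum (by positivity)
      _ = C * N := h2
  have hdiffbd : ∀ (gs : Fin K → Ψ) (x : T), |featAvg φs φ1 f gs x - f1 x| ≤ C * N := by
    intro gs x
    obtain ⟨h1, h2⟩ := hAvgmem gs x
    rw [abs_sub_le_iff]
    have := hf1_0 x
    have h3 := hf1N x
    have h4 : N ≤ C * N := by nlinarith
    constructor <;> linarith
  have hFB : ∀ gs, |F gs| ≤ C * N := by
    intro gs
    rw [hFeq, abs_of_nonneg (Real.sqrt_nonneg _)]
    exact aux_wnorm_le χ hχ0 hχ1 _ _ hCN.le (hdiffbd gs)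
  set c : ℝ := C * N / K with hc
  have hc0 : 0 < c := by positivity
  have hFdiff : ∀ (gs : Fin K → Ψ) (i : Fin K) (g' : Ψ),
      |F gs - F (Function.update gs i g')| ≤ c := by
    intro gs i g'
    rw [hFeq, hFeq]
    refine le_trans (aux_wtri χ hχ0 _ _) ?_
    refine aux_wnorm_le χ hχ0 hχ1 _ _ hc0.le ?_
    intro x
    have hupd_eq : (fun i' => Y (Function.update gs i g' i') x)
        = Function.update (fun i' => Y (gs i') x) i (Y g' x) := by
      funext i'
      exact Function.apply_update (fun _ g => Y g x) gs i g' i'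
    have hsum_upd : ∑ i', Y (Function.update gs i g' i') x
        = Y g' x + ∑ i' ∈ Finset.univ \ {i}, Y (gs i') x := by
      calc ∑ i', Y (Function.update gs i g' i') x
          = ∑ i', Function.update (fun i' => Y (gs i') x) i (Y g' x) i' := by rw [hupd_eq]
      _ = Y g' x + ∑ i' ∈ Finset.univ \ {i}, Y (gs i') x :=
          Finset.sum_update_of_mem (Finset.mem_univ i) _ _
    have hsum_old : ∑ i', Y (gs i') x
        = Y (gs i) x + ∑ i' ∈ Finset.univ \ {i}, Y (gs i') x := by
      rw [Finset.sdiff_singleton_eq_erase]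
      exact (Finset.add_sum_erase _ _ (Finset.mem_univ i)).symm
    have hdiff_eq : (featAvg φs φ1 f gs x - f1 x) - (featAvg φs φ1 f (Function.update gs i g') x - f1 x)
        = (1/(K:ℝ)) * (Y (gs i) x - Y g' x) := by
      rw [hAvg, hAvg, hsum_upd, hsum_old]
      ring
    rw [hdiff_eq, abs_mul]
    have hYY : |Y (gs i) x - Y g' x| ≤ C * N := by
      rw [abs_sub_le_iff]
      constructor
      · have := hY0 g' x; have := hYCN (gs i) x; linarith
      · have := hY0 (gs i) x; have := hYCN g' x; linarith
    calc |1/(K:ℝ)| * |Y (gs i) x - Y g' x| ≤ |1/(K:ℝ)| * (C*N) :=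
          mul_le_mul_of_nonneg_left hYY (abs_nonneg _)
    _ = c := by
        rw [abs_of_pos (by positivity : (0:ℝ) < 1/(K:ℝ)), hc, div_mul_eq_mul_div, one_mul]
  -- expected value bound
  have hq := aux_moment p χ hχ0 hχ1 Y f1 (C*N) hCN.le hbd hmean K
  set q : (Fin K → Ψ) → ℝ := fun gs => ∑ x, χ x * (featAvg φs φ1 f gs x - f1 x)^2 with hqdef
  have hq_rw : ∀ gs, q gs = (1/(K:ℝ)^2) * ∑ x, χ x * ((∑ i, Y (gs i) x) - K * f1 x)^2 := by
    intro gs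
    rw [hqdef]
    rw [Finset.mul_sum]
    refine Finset.sum_congr rfl fun x _ => ?_
    rw [hAvg]
    field_simp
  have hq0 : ∀ gs, 0 ≤ q gs := fun gs => aux_wsum_nonneg χ hχ0 _
  have hqB : ∀ gs, |q gs| ≤ (C*N)^2 := by
    intro gs
    rw [abs_of_nonneg (hq0 gs)]
    exact aux_wbd χ hχ0 hχ1 _ _ hCN.le (hdiffbd gs)
  have hqint : Integrable q μ := aux_integrable q hqB
  have hFint : Integrable F μ := aux_integrable F hFB
  have hEq : ∫ gs, q gs ∂μ ≤ C^2 * N^2 / K := by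
    have : ∫ gs, q gs ∂μ
        = (1/(K:ℝ)^2) * ∫ gs, (∑ x, χ x * ((∑ i, Y (gs i) x) - K * f1 x)^2) ∂μ := by
      simp_rw [hq_rw]
      rw [integral_const_mul]
    rw [this]
    calc (1/(K:ℝ)^2) * ∫ gs, (∑ x, χ x * ((∑ i, Y (gs i) x) - K * f1 x)^2) ∂μ
        ≤ (1/(K:ℝ)^2) * ((K:ℝ) * (C*N)^2) :=
          mul_le_mul_of_nonneg_left hq (by positivity)
    _ = C^2 * N^2 / K := by field_simp
  set m : ℝ := ∫ gs, F gs ∂μ with hm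
  have hm0 : 0 ≤ m := integral_nonneg fun gs => by rw [hFeq]; exact Real.sqrt_nonneg _
  have hmsq : m^2 ≤ ∫ gs, q gs ∂μ := by
    have hexp : ∀ gs, (F gs - m)^2 = q gs - (2*m) * F gs + m^2 := by
      intro gs
      have : (F gs)^2 = q gs := by
        rw [hFeq, Real.sq_sqrt (hq0 gs)]
      nlinarith [this]
    have h0 : 0 ≤ ∫ gs, (F gs - m)^2 ∂μ := integral_nonneg fun gs => sq_nonneg _
    have : ∫ gs, (F gs - m)^2 ∂μ = ∫ gs, q gs ∂μ - m^2 := by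
      simp_rw [hexp]
      have hint2 : Integrable (fun gs => (2*m) * F gs) μ := hFint.const_mul (2*m)
      have hint1 : Integrable (fun gs => q gs - (2*m) * F gs) μ := hqint.sub hint2
      rw [integral_add hint1 (integrable_const _), integral_sub hqint hint2,
        integral_const_mul, integral_const]
      simp only [probReal_univ, smul_eq_mul, one_mul, ← hm]
      ring
    linarith [this ▸ h0]
  have hmε : m ≤ ε := by
    have h1 : C^2*N^2/K ≤ ε^2 := by
      rw [div_le_iff₀ hKpos]
      calc C^2*N^2 = (C^2*N^2/ε^2) * ε^2 :=
            (div_mul_cancel₀ _ (by positivity : (ε:ℝ)^2 ≠ 0)).symm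
      _ ≤ (K:ℝ) * ε^2 := mul_le_mul_of_nonneg_right hKR (by positivity)
      _ = ε^2 * (K:ℝ) := mul_comm _ _
    nlinarith [hmsq.trans (hEq.trans h1)]
  -- Chernoff bound via McDiarmid
  set t : ℝ := ε * K / (C^2 * N^2) with htdef
  have ht0 : 0 ≤ t := by positivity
  have hmgf := aux_mcdiarmid p c t (C*N) hc0 ht0 K F hFB hFdiff
  rw [← hm] at hmgf
  -- Markov
  set A : Set (Fin K → Ψ) := {gs | Real.exp (t*(m+ε)) ≤ Real.exp (t * F gs)} with hA
  have hsub : {gs | ¬ deltaK χ φs φ1 f gs ≤ 2 * ε} ⊆ A := by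
    intro gs hgs
    simp only [Set.mem_setOf_eq, not_le] at hgs
    have : m + ε ≤ F gs := by
      have : F gs = deltaK χ φs φ1 f gs := rfl
      rw [this]
      linarith
    exact Real.exp_le_exp.2 (mul_le_mul_of_nonneg_left this ht0)
  have hexp_int : Integrable (fun gs => Real.exp (t * F gs)) μ := by
    refine aux_integrable _ (B := Real.exp (t * (C*N))) fun gs => ?_
    rw [abs_of_nonneg (Real.exp_nonneg _)]
    refine Real.exp_le_exp.2 (mul_le_mul_of_nonneg_left ?_ ht0)
    exact le_of_abs_le (hFB gs)
  have hmarkov := mul_meas_ge_le_integral_of_nonneg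
    (Filter.Eventually.of_forall fun gs => Real.exp_nonneg (t * F gs)) hexp_int
    (Real.exp (t*(m+ε)))
  have hAA : {x | Real.exp (t*(m+ε)) ≤ Real.exp (t * F x)} = A := rfl
  rw [hAA] at hmarkov
  have htail : (μ A).toReal ≤ Real.exp (t^2*K*c^2/2 - t*ε) := by
    have h1 : Real.exp (t*(m+ε)) * (μ A).toReal ≤ Real.exp (t * m + t^2*K*c^2/2) :=
      hmarkov.trans hmgf
    have h2 : (0:ℝ) < Real.exp (t*(m+ε)) := Real.exp_pos _
    calc (μ A).toReal = Real.exp (t*(m+ε)) * (μ A).toReal / Real.exp (t*(m+ε)) := by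
          field_simp
    _ ≤ Real.exp (t * m + t^2*K*c^2/2) / Real.exp (t*(m+ε)) := by gcongr
    _ = Real.exp (t^2*K*c^2/2 - t*ε) := by
        rw [← Real.exp_sub]
        ring_nf
  have hexpo : t^2*(K:ℝ)*c^2/2 - t*ε = -((K:ℝ)*ε^2/(2*C^2*N^2)) := by
    rw [htdef, hc]
    field_simp
    ring
  rw [hexpo] at htail
  have hlog : Real.exp (-((K:ℝ)*ε^2/(2*C^2*N^2))) ≤ δ := by
    have hlogδ : 0 ≤ Real.log (1/δ) := Real.log_nonneg ((le_div_iff₀ hδ0).2 (by linarith))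
    have h2 : 2 * Real.log (1/δ) * C^2 * N^2 / ε^2 ≤ (K:ℝ) := by
      calc 2 * Real.log (1/δ) * C^2 * N^2 / ε^2
          ≤ max (2 * Real.log (1 / δ)) 1 * C ^ 2 * N ^ 2 / ε ^ 2 := by
            gcongr
            exact le_max_left _ _
      _ ≤ (K:ℝ) := hK
    have h3 : 2 * Real.log (1/δ) * C^2 * N^2 ≤ (K:ℝ) * ε^2 := by
      rw [div_le_iff₀ (by positivity : (0:ℝ) < ε^2)] at h2
      linarith
    have h4 : Real.log (1/δ) ≤ (K:ℝ)*ε^2/(2*C^2*N^2) := by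
      rw [le_div_iff₀ (by positivity : (0:ℝ) < 2*C^2*N^2)]
      nlinarith
    calc Real.exp (-((K:ℝ)*ε^2/(2*C^2*N^2))) ≤ Real.exp (-(Real.log (1/δ))) := by
          exact Real.exp_le_exp.2 (by linarith)
    _ = δ := by
        rw [one_div, Real.log_inv, neg_neg, Real.exp_log hδ0]
  calc μ {gs | ¬ deltaK χ φs φ1 f gs ≤ 2 * ε} ≤ μ A := measure_mono hsub
  _ = ENNReal.ofReal ((μ A).toReal) := (ENNReal.ofReal_toReal (measure_ne_top μ A)).symm
  _ ≤ ENNReal.ofReal δ := ENNReal.ofReal_le_ofReal (htail.trans hlog)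

/-- Transfer of the product PMF measure between σ-algebras on measurable sets. -/
lemma aux_transfer {Ψ : Type*} [Countable Ψ] (m mt : MeasurableSpace Ψ)
    (hle : m ≤ mt) (hdt : @DiscreteMeasurableSpace Ψ mt)
    (φ : PMF Ψ) (K : ℕ) {E : Set (Fin K → Ψ)}
    (hE : MeasurableSet[@MeasurableSpace.pi (Fin K) (fun _ => Ψ) (fun _ => m)] E) :
    @Measure.pi (Fin K) (fun _ => Ψ) _ (fun _ => m) (fun _ => @PMF.toMeasure Ψ m φ) E
      = @Measure.pi (Fin K) (fun _ => Ψ) _ (fun _ => mt) (fun _ => @PMF.toMeasure Ψ mt φ) E := by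
  have hple : (@MeasurableSpace.pi (Fin K) (fun _ => Ψ) (fun _ => m))
      ≤ (@MeasurableSpace.pi (Fin K) (fun _ => Ψ) (fun _ => mt)) := by
    refine iSup_mono fun i => ?_
    exact MeasurableSpace.comap_mono hle
  haveI hpm : IsProbabilityMeasure (@PMF.toMeasure Ψ m φ) :=
    @PMF.toMeasure.isProbabilityMeasure Ψ m φ
  haveI hpt : IsProbabilityMeasure (@PMF.toMeasure Ψ mt φ) :=
    @PMF.toMeasure.isProbabilityMeasure Ψ mt φ
  haveI hsm : ∀ _i : Fin K, SigmaFinite (@PMF.toMeasure Ψ m φ) := fun _ => inferInstance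
  set μt := @Measure.pi (Fin K) (fun _ => Ψ) _ (fun _ => mt) (fun _ => @PMF.toMeasure Ψ mt φ)
    with hμt
  have hpi : @Measure.pi (Fin K) (fun _ => Ψ) _ (fun _ => m) (fun _ => @PMF.toMeasure Ψ m φ)
      = @Measure.trim _ _ _ μt hple := by
    refine @Measure.pi_eq (Fin K) (fun _ => Ψ) _ (fun _ => m) (fun _ => @PMF.toMeasure Ψ m φ)
      hsm _ ?_
    intro s hs
    have hbox : MeasurableSet[@MeasurableSpace.pi (Fin K) (fun _ => Ψ) (fun _ => m)]
        (Set.pi Set.univ s) :=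
      @MeasurableSet.univ_pi (Fin K) (fun _ => Ψ) (fun _ => m) _ s hs
    rw [trim_measurableSet_eq hple hbox]
    have := @Measure.pi_pi (Fin K) (fun _ => Ψ) _ (fun _ => mt)
      (fun _ => @PMF.toMeasure Ψ mt φ) (fun _ => inferInstance) s
    rw [hμt, this]
    refine Finset.prod_congr rfl fun i _ => ?_
    rw [@PMF.toMeasure_apply Ψ mt φ _ (MeasurableSet.of_discrete),
      @PMF.toMeasure_apply Ψ m φ _ (hs i)]
  rw [hpi, trim_measurableSet_eq hple hE]

theorem stmt_0 {T Ψ : Type*} [Fintype T] [Countable Ψ] [MeasurableSpace Ψ]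
    (χ : T → ℝ) (hχ0 : ∀ x, 0 ≤ χ x) (hχ1 : ∑ x, χ x = 1)
    (φs φ1 : PMF Ψ) (hφs : ∀ g, 0 < φs g)
    (f : Ψ → T → ℝ) (N : ℝ) (hN : 0 < N)
    (hf0 : ∀ g x, 0 ≤ f g x) (hfN : ∀ g x, f g x ≤ N)
    (hBdd : BddAbove (Set.range fun g => (φ1 g).toReal / (φs g).toReal))
    (C : ℝ) (hC : C = ⨆ g, (φ1 g).toReal / (φs g).toReal)
    (K : ℕ) (ε δ : ℝ) (hε : 0 < ε) (hδ : δ ∈ Set.Ioo (0 : ℝ) 1)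
    (hK : max (2 * Real.log (1 / δ)) 1 * C ^ 2 * N ^ 2 / ε ^ 2 ≤ (K : ℝ)) :
    ENNReal.ofReal (1 - δ) ≤
      (Measure.pi fun _ : Fin K => φs.toMeasure)
        {gs | deltaK χ φs φ1 f gs ≤ 2 * ε} := by
  classical
  obtain ⟨hδ0, hδ1⟩ := hδ
  have hdt : @DiscreteMeasurableSpace Ψ ⊤ :=
    @DiscreteMeasurableSpace.mk Ψ ⊤ fun _ => MeasurableSpace.measurableSet_top
  have hcore := @aux_core T Ψ _ _ ⊤ hdt χ hχ0 hχ1 φs φ1 hφs f N hN hf0 hfN hBdd C hC K ε δ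
    hε ⟨hδ0, hδ1⟩ hK
  rw [measure_eq_iInf]
  refine le_iInf fun E => le_iInf fun hgood => le_iInf fun hE => ?_
  have htrans := aux_transfer ‹MeasurableSpace Ψ› ⊤ le_top hdt φs K (E := Eᶜ) hE.compl
  have h1 : (Measure.pi fun _ : Fin K => φs.toMeasure) Eᶜ ≤ ENNReal.ofReal δ := by
    rw [htrans]
    refine le_trans (measure_mono ?_) hcore
    intro gs hgs hle
    exact hgs (hgood hle)
  have h2 : (Measure.pi fun _ : Fin K => φs.toMeasure) Eᶜ
      = 1 - (Measure.pi fun _ : Fin K => φs.toMeasure) E := prob_compl_eq_one_sub hE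
  calc ENNReal.ofReal (1 - δ) = 1 - ENNReal.ofReal δ := by
        rw [ENNReal.ofReal_sub _ hδ0.le, ENNReal.ofReal_one]
  _ ≤ 1 - (Measure.pi fun _ : Fin K => φs.toMeasure) Eᶜ := tsub_le_tsub_left h1 1
  _ = (Measure.pi fun _ : Fin K => φs.toMeasure) E := by
      rw [h2, ENNReal.sub_sub_cancel ENNReal.one_ne_top prob_le_one]
  _ ≤ (Measure.pi fun _ : Fin K => φs.toMeasure) E := le_rfl
end

section
/- In the random-feature setting, the expectation of Δ_K over an i.i.d. sample (g_1,…,g_K) drawn from φ* satisfies E[Δ_K(g_1,…,g_K)] ≤ C·N/√K. -/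
open MeasureTheory

lemma meas_all {Ψ : Type*} [Countable Ψ] [MeasurableSpace Ψ] [MeasurableSingletonClass Ψ]
    (h : Ψ → ℝ) : Measurable h := fun _ _ => (Set.to_countable _).measurableSet

lemma integrable_of_bdd {α : Type*} [MeasurableSpace α] {μ : Measure α}
    [IsFiniteMeasure μ] {F : α → ℝ} (hm : AEStronglyMeasurable F μ) {M : ℝ}
    (hb : ∀ a, |F a| ≤ M) : Integrable F μ :=
  (integrable_const M).mono' hm (Filter.Eventually.of_forall fun a => by
    simpa [Real.norm_eq_abs] using hb a)

lemma core {T Ψ : Type*} [Fintype T] [Countable Ψ] [MeasurableSpace Ψ]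
    [MeasurableSingletonClass Ψ]
    (χ : T → ℝ) (hχ0 : ∀ x, 0 ≤ χ x) (hχ1 : ∑ x, χ x = 1)
    (φs φ1 : PMF Ψ) (hφs : ∀ g, 0 < φs g)
    (f : Ψ → T → ℝ) (N : ℝ) (hN : 0 < N)
    (hf0 : ∀ g x, 0 ≤ f g x) (hfN : ∀ g x, f g x ≤ N)
    (hBdd : BddAbove (Set.range fun g => (φ1 g).toReal / (φs g).toReal))
    (C : ℝ) (hC : C = ⨆ g, (φ1 g).toReal / (φs g).toReal)
    (K : ℕ) (hKpos : 0 < K) :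
    ∫ gs, deltaK χ φs φ1 f gs ∂(Measure.pi fun _ : Fin K => φs.toMeasure)
      ≤ C * N / Real.sqrt K := by
  classical
  haveI : Nonempty Ψ := ⟨φs.support_nonempty.choose⟩
  letI : MeasureSpace Ψ := ⟨φs.toMeasure⟩
  haveI : IsProbabilityMeasure (volume : Measure Ψ) :=
    PMF.toMeasure.isProbabilityMeasure φs
  have hμeq : (Measure.pi fun _ : Fin K => φs.toMeasure)
      = (volume : Measure (Fin K → Ψ)) := rfl
  rw [hμeq]
  haveI : IsProbabilityMeasure (volume : Measure (Fin K → Ψ)) := by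
    rw [show (volume : Measure (Fin K → Ψ)) = Measure.pi fun _ => (volume : Measure Ψ) from rfl]
    infer_instance
  set r : Ψ → ℝ := fun g => (φ1 g).toReal / (φs g).toReal with hrdef
  have hr0 : ∀ g, 0 ≤ r g := fun g =>
    div_nonneg ENNReal.toReal_nonneg ENNReal.toReal_nonneg
  have hrC : ∀ g, r g ≤ C := fun g => hC ▸ le_ciSup hBdd g
  have hC0 : 0 ≤ C := le_trans (hr0 (Classical.arbitrary Ψ)) (hrC _)
  have hK0 : (0:ℝ) < (K:ℝ) := by exact_mod_cast hKpos
  -- the feature function and its bounds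
  have hh0 : ∀ x g, 0 ≤ r g * f g x := fun x g => mul_nonneg (hr0 g) (hf0 g x)
  have hhCN : ∀ x g, r g * f g x ≤ C * N := fun x g =>
    mul_le_mul (hrC g) (hfN g x) (hf0 g x) hC0
  have hInt1 : ∀ x, Integrable (fun g => r g * f g x) volume := fun x =>
    integrable_of_bdd (meas_all _).aestronglyMeasurable (M := C * N) (fun g => by
      rw [abs_of_nonneg (hh0 x g)]; exact hhCN x g)
  set m : T → ℝ := fun x => ∫ g, r g * f g x with hmdef
  have hm0 : ∀ x, 0 ≤ m x := fun x => integral_nonneg (hh0 x)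
  have hmCN : ∀ x, m x ≤ C * N := fun x => by
    calc m x ≤ ∫ _ : Ψ, C * N := integral_mono (hInt1 x) (integrable_const _) (hhCN x)
    _ = C * N := by simp
  have hfe : ∀ x, featExp φ1 f x = m x := by
    intro x
    rw [hmdef]
    simp only
    rw [integral_countable' (hInt1 x)]
    refine tsum_congr fun g => ?_
    have hsing : (volume : Measure Ψ) {g} = φs g :=
      φs.toMeasure_apply_singleton g (measurableSet_singleton g)
    have hne : (φs g).toReal ≠ 0 :=
      ENNReal.toReal_ne_zero.mpr ⟨(hφs g).ne', PMF.apply_ne_top _ _⟩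
    rw [measureReal_def, hsing, smul_eq_mul, hrdef]
    field_simp
  -- centered feature function
  set a : T → Ψ → ℝ := fun x g => r g * f g x - m x with hadef
  have hamb : ∀ x g, |a x g| ≤ C * N := fun x g => by
    rw [abs_le]
    constructor <;> simp only [hadef] <;> nlinarith [hh0 x g, hhCN x g, hm0 x, hmCN x]
  have haint : ∀ x, Integrable (a x) volume := fun x =>
    integrable_of_bdd (meas_all _).aestronglyMeasurable (M := C * N) (hamb x)
  have hazero : ∀ x, ∫ g, a x g = 0 := fun x => by
    simp only [hadef]
    rw [integral_sub (hInt1 x) (integrable_const _)]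
    simp [hmdef]
  have hasq : ∀ x, ∫ g, (a x g) ^ 2 ≤ C ^ 2 * N ^ 2 := by
    intro x
    have h1 : Integrable (fun g => (a x g) ^ 2) volume :=
      integrable_of_bdd (meas_all _).aestronglyMeasurable (M := (C*N)^2) (fun g => by
        rw [abs_of_nonneg (sq_nonneg _), ← sq_abs]
        exact pow_le_pow_left₀ (abs_nonneg _) (hamb x g) 2)
    calc ∫ g, (a x g) ^ 2 ≤ ∫ _ : Ψ, (C*N)^2 :=
          integral_mono h1 (integrable_const _) (fun g => by
            rw [← sq_abs]; exact pow_le_pow_left₀ (abs_nonneg _) (hamb x g) 2)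
      _ = C ^ 2 * N ^ 2 := by simp [mul_pow]
  -- second-moment bound at each x
  have hIx : ∀ x, ∫ gs : Fin K → Ψ, (featAvg φs φ1 f gs x - featExp φ1 f x) ^ 2
      ≤ C ^ 2 * N ^ 2 / K := by
    intro x
    have hpt : ∀ gs : Fin K → Ψ, featAvg φs φ1 f gs x - featExp φ1 f x
        = (1/(K:ℝ)) * ∑ i, a x (gs i) := by
      intro gs
      have h2 : ∑ i : Fin K, a x (gs i)
          = (∑ i : Fin K, r (gs i) * f (gs i) x) - (K:ℝ) * m x := by
        simp [hadef, Finset.sum_sub_distrib, Finset.sum_const, mul_comm]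
      rw [h2, mul_sub, hfe x]
      have h3 : (1/(K:ℝ)) * ((K:ℝ) * m x) = m x := by field_simp
      rw [h3]
      simp [featAvg, hrdef]
    have hprod : ∀ i j : Fin K, (∫ gs : Fin K → Ψ, a x (gs i) * a x (gs j))
        = ∏ k, ∫ g : Ψ, ((if k = i then a x g else 1) * (if k = j then a x g else 1)) := by
      intro i j
      rw [← integral_fintype_prod_eq_prod (𝕜 := ℝ) (ι := Fin K)
        (f := fun k g => (if k = i then a x g else 1) * (if k = j then a x g else 1))]
      congr 1
      funext gs
      rw [Finset.prod_mul_distrib, Finset.prod_ite_eq' Finset.univ i (fun k => a x (gs k)),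
        Finset.prod_ite_eq' Finset.univ j (fun k => a x (gs k))]
      simp
    have hEij : ∀ i j : Fin K, i ≠ j → (∫ gs : Fin K → Ψ, a x (gs i) * a x (gs j)) = 0 := by
      intro i j hij
      rw [hprod i j]
      refine Finset.prod_eq_zero (Finset.mem_univ i) ?_
      simp only [if_pos rfl, if_neg hij, mul_one]
      exact hazero x
    have hEii : ∀ i : Fin K, (∫ gs : Fin K → Ψ, a x (gs i) * a x (gs i))
        = ∫ g, (a x g) ^ 2 := by
      intro i
      rw [hprod i i]
      have h1 : ∀ k : Fin K, ∀ g : Ψ, ((if k = i then a x g else 1) * (if k = i then a x g else 1))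
          = (if k = i then a x g ^ 2 else 1) := by
        intro k g; by_cases h : k = i <;> simp [h, pow_two]
      simp_rw [h1]
      rw [Finset.prod_eq_single i (fun k _ hk => by simp [if_neg hk]) (by simp)]
      simp
    have hintij : ∀ i j : Fin K, Integrable (fun gs : Fin K → Ψ => a x (gs i) * a x (gs j))
        volume := by
      intro i j
      have hb : ∀ gs : Fin K → Ψ, |a x (gs i) * a x (gs j)| ≤ (C*N)*(C*N) := fun gs => by
        rw [abs_mul]
        exact mul_le_mul (hamb x _) (hamb x _) (abs_nonneg _) (mul_nonneg hC0 hN.le)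
      exact integrable_of_bdd (((meas_all (a x)).comp (measurable_pi_apply i)).mul
        ((meas_all (a x)).comp (measurable_pi_apply j))).aestronglyMeasurable hb
    calc ∫ gs : Fin K → Ψ, (featAvg φs φ1 f gs x - featExp φ1 f x) ^ 2
        = ∫ gs : Fin K → Ψ, (1/(K:ℝ))^2 * ∑ i, ∑ j, a x (gs i) * a x (gs j) := by
          congr 1; funext gs
          rw [hpt gs, mul_pow, pow_two (∑ i, a x (gs i)), Finset.sum_mul_sum]
      _ = (1/(K:ℝ))^2 * ∑ i, ∑ j, ∫ gs : Fin K → Ψ, a x (gs i) * a x (gs j) := by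
          rw [integral_const_mul]
          congr 1
          rw [integral_finset_sum _ (fun i _ => integrable_finset_sum _ (fun j _ => hintij i j))]
          refine Finset.sum_congr rfl fun i _ => ?_
          rw [integral_finset_sum _ (fun j _ => hintij i j)]
      _ = (1/(K:ℝ))^2 * ((K:ℝ) * ∫ g, (a x g) ^ 2) := by
          congr 1
          rw [Finset.sum_congr rfl (fun i _ =>
            Finset.sum_eq_single i (fun j _ hj => hEij i j (Ne.symm hj)) (by simp))]
          rw [Finset.sum_congr rfl (fun i _ => hEii i)]
          simp [Finset.sum_const, mul_comm]
      _ = (∫ g, (a x g) ^ 2) / K := by field_simp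
      _ ≤ C ^ 2 * N ^ 2 / K := by
          gcongr
          exact hasq x
  -- measurability and bounds for deltaK
  have hA : ∀ x : T, Measurable fun gs : Fin K → Ψ => featAvg φs φ1 f gs x := by
    intro x
    exact (Finset.measurable_sum Finset.univ (fun i _ =>
      (meas_all (fun g => (φ1 g).toReal / (φs g).toReal * f g x)).comp
        (measurable_pi_apply i))).const_mul _
  have hmeasδ : Measurable fun gs : Fin K → Ψ => deltaK χ φs φ1 f gs := by
    simp only [deltaK]
    exact Real.continuous_sqrt.measurable.comp (Finset.measurable_sum Finset.univ fun x _ =>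
      (((hA x).sub measurable_const).pow_const 2).const_mul (χ x))
  have hA0 : ∀ (gs : Fin K → Ψ) x, 0 ≤ featAvg φs φ1 f gs x := fun gs x =>
    mul_nonneg (by positivity) (Finset.sum_nonneg fun i _ => hh0 x (gs i))
  have hACN : ∀ (gs : Fin K → Ψ) x, featAvg φs φ1 f gs x ≤ C * N := by
    intro gs x
    have h1 : ∑ i : Fin K, ((φ1 (gs i)).toReal / (φs (gs i)).toReal) * f (gs i) x
        ≤ (K:ℝ) * (C * N) := by
      calc ∑ i : Fin K, ((φ1 (gs i)).toReal / (φs (gs i)).toReal) * f (gs i) x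
          ≤ ∑ _i : Fin K, C * N := Finset.sum_le_sum fun i _ => hhCN x (gs i)
        _ = (K:ℝ) * (C * N) := by simp [mul_comm]
    calc featAvg φs φ1 f gs x ≤ (1/(K:ℝ)) * ((K:ℝ) * (C * N)) := by
          exact mul_le_mul_of_nonneg_left h1 (by positivity)
      _ = C * N := by field_simp
  have hdiff : ∀ (gs : Fin K → Ψ) x, |featAvg φs φ1 f gs x - featExp φ1 f x| ≤ C * N := by
    intro gs x
    rw [hfe x, abs_le]
    constructor <;> nlinarith [hA0 gs x, hACN gs x, hm0 x, hmCN x]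
  have hδ0 : ∀ gs : Fin K → Ψ, 0 ≤ deltaK χ φs φ1 f gs := fun gs => Real.sqrt_nonneg _
  have hδb : ∀ gs : Fin K → Ψ, |deltaK χ φs φ1 f gs| ≤ C * N := by
    intro gs
    rw [abs_of_nonneg (hδ0 gs)]
    simp only [deltaK]
    have h1 : ∑ x, χ x * (featAvg φs φ1 f gs x - featExp φ1 f x) ^ 2
        ≤ ∑ x, χ x * (C * N) ^ 2 :=
      Finset.sum_le_sum fun x _ => mul_le_mul_of_nonneg_left
        (by rw [← sq_abs]; exact pow_le_pow_left₀ (abs_nonneg _) (hdiff gs x) 2) (hχ0 x)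
    have h2 : ∑ x, χ x * (C * N) ^ 2 = (C * N) ^ 2 := by
      rw [← Finset.sum_mul, hχ1, one_mul]
    calc Real.sqrt (∑ x, χ x * (featAvg φs φ1 f gs x - featExp φ1 f x) ^ 2)
        ≤ Real.sqrt ((C * N) ^ 2) := Real.sqrt_le_sqrt (h1.trans_eq h2)
      _ = C * N := Real.sqrt_sq (mul_nonneg hC0 hN.le)
  have hδ2 : MemLp (fun gs : Fin K → Ψ => deltaK χ φs φ1 f gs) 2 volume :=
    MemLp.of_bound hmeasδ.aestronglyMeasurable (C * N)
      (Filter.Eventually.of_forall fun gs => by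
        simpa [Real.norm_eq_abs] using hδb gs)
  have hsqpt : ∀ gs : Fin K → Ψ, (deltaK χ φs φ1 f gs) ^ 2
      = ∑ x, χ x * (featAvg φs φ1 f gs x - featExp φ1 f x) ^ 2 := by
    intro gs
    simp only [deltaK]
    exact Real.sq_sqrt (Finset.sum_nonneg fun x _ => mul_nonneg (hχ0 x) (sq_nonneg _))
  have hintx : ∀ x : T, Integrable
      (fun gs : Fin K → Ψ => χ x * (featAvg φs φ1 f gs x - featExp φ1 f x) ^ 2) volume := by
    intro x
    refine integrable_of_bdd
      ((((hA x).sub measurable_const).pow_const 2).const_mul (χ x)).aestronglyMeasurable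
      (M := |χ x| * (C * N) ^ 2) (fun gs => ?_)
    rw [abs_mul]
    refine mul_le_mul_of_nonneg_left ?_ (abs_nonneg _)
    rw [abs_of_nonneg (sq_nonneg _), ← sq_abs]
    exact pow_le_pow_left₀ (abs_nonneg _) (hdiff gs x) 2
  have hB : ∫ gs : Fin K → Ψ, (deltaK χ φs φ1 f gs) ^ 2 ≤ C ^ 2 * N ^ 2 / K := by
    have h1 : ∫ gs : Fin K → Ψ, (deltaK χ φs φ1 f gs) ^ 2
        = ∑ x, χ x * ∫ gs : Fin K → Ψ, (featAvg φs φ1 f gs x - featExp φ1 f x) ^ 2 := by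
      calc ∫ gs : Fin K → Ψ, (deltaK χ φs φ1 f gs) ^ 2
          = ∫ gs : Fin K → Ψ, ∑ x, χ x * (featAvg φs φ1 f gs x - featExp φ1 f x) ^ 2 := by
            congr 1; funext gs; exact hsqpt gs
        _ = ∑ x, ∫ gs : Fin K → Ψ, χ x * (featAvg φs φ1 f gs x - featExp φ1 f x) ^ 2 :=
            integral_finset_sum _ (fun x _ => hintx x)
        _ = ∑ x, χ x * ∫ gs : Fin K → Ψ, (featAvg φs φ1 f gs x - featExp φ1 f x) ^ 2 := by
            refine Finset.sum_congr rfl fun x _ => integral_const_mul _ _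
    rw [h1]
    calc ∑ x, χ x * ∫ gs : Fin K → Ψ, (featAvg φs φ1 f gs x - featExp φ1 f x) ^ 2
        ≤ ∑ x, χ x * (C ^ 2 * N ^ 2 / K) :=
          Finset.sum_le_sum fun x _ => mul_le_mul_of_nonneg_left (hIx x) (hχ0 x)
      _ = C ^ 2 * N ^ 2 / K := by rw [← Finset.sum_mul, hχ1, one_mul]
  have hAnn : 0 ≤ ∫ gs : Fin K → Ψ, deltaK χ φs φ1 f gs := integral_nonneg hδ0
  have hA2 : (∫ gs : Fin K → Ψ, deltaK χ φs φ1 f gs) ^ 2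
      ≤ ∫ gs : Fin K → Ψ, (deltaK χ φs φ1 f gs) ^ 2 := by
    have h := ProbabilityTheory.variance_nonneg
      (fun gs : Fin K → Ψ => deltaK χ φs φ1 f gs) volume
    rw [ProbabilityTheory.variance_eq_sub hδ2] at h
    simp only [Pi.pow_apply] at h
    linarith
  calc ∫ gs : Fin K → Ψ, deltaK χ φs φ1 f gs
      ≤ Real.sqrt (∫ gs : Fin K → Ψ, (deltaK χ φs φ1 f gs) ^ 2) := by
        rw [← Real.sqrt_sq hAnn]
        exact Real.sqrt_le_sqrt hA2
    _ ≤ Real.sqrt (C ^ 2 * N ^ 2 / K) := Real.sqrt_le_sqrt hB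
    _ = C * N / Real.sqrt K := by
        rw [show C ^ 2 * N ^ 2 = (C * N) ^ 2 by ring, Real.sqrt_div (sq_nonneg _),
          Real.sqrt_sq (mul_nonneg hC0 hN.le)]

theorem stmt_1 {T Ψ : Type*} [Fintype T] [Countable Ψ] [MeasurableSpace Ψ]
    (χ : T → ℝ) (hχ0 : ∀ x, 0 ≤ χ x) (hχ1 : ∑ x, χ x = 1)
    (φs φ1 : PMF Ψ) (hφs : ∀ g, 0 < φs g)
    (f : Ψ → T → ℝ) (N : ℝ) (hN : 0 < N)
    (hf0 : ∀ g x, 0 ≤ f g x) (hfN : ∀ g x, f g x ≤ N)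
    (hBdd : BddAbove (Set.range fun g => (φ1 g).toReal / (φs g).toReal))
    (C : ℝ) (hC : C = ⨆ g, (φ1 g).toReal / (φs g).toReal)
    (K : ℕ) (hKpos : 0 < K) :
    ∫ gs, deltaK χ φs φ1 f gs ∂(Measure.pi fun _ : Fin K => φs.toMeasure)
      ≤ C * N / Real.sqrt K := by
  classical
  by_cases hInt : Integrable (fun gs => deltaK χ φs φ1 f gs)
      (Measure.pi fun _ : Fin K => φs.toMeasure)
  · -- transfer to the `⊤` σ-algebra where the core computation applies
    haveI htopSing : @MeasurableSingletonClass Ψ ⊤ :=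
      @MeasurableSingletonClass.mk Ψ ⊤ (fun _ => MeasurableSpace.measurableSet_top)
    set μt : @Measure (Fin K → Ψ) (@MeasurableSpace.pi (Fin K) (fun _ => Ψ) fun _ => ⊤) :=
      @Measure.pi (Fin K) (fun _ => Ψ) _ (fun _ => ⊤)
        (fun _ => @PMF.toMeasure Ψ ⊤ φs) with hμt
    have hid : @Measurable (Fin K → Ψ) (Fin K → Ψ)
        (@MeasurableSpace.pi _ _ (fun _ => (⊤ : MeasurableSpace Ψ)))
        (@MeasurableSpace.pi _ _ (fun _ => ‹MeasurableSpace Ψ›)) id := by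
      refine @measurable_pi_lambda (Fin K → Ψ) (Fin K) (fun _ => Ψ)
        (@MeasurableSpace.pi _ _ (fun _ => (⊤ : MeasurableSpace Ψ)))
        (fun _ => ‹MeasurableSpace Ψ›) id (fun i => ?_)
      exact Measurable.mono (@measurable_pi_apply (Fin K) (fun _ => Ψ) (fun _ => ⊤) i)
        le_rfl le_top
    haveI : ∀ i : Fin K, SigmaFinite ((fun _ : Fin K => φs.toMeasure) i) := fun i => by
      haveI := PMF.toMeasure.isProbabilityMeasure φs
      infer_instance
    have key : (Measure.pi fun _ : Fin K => φs.toMeasure)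
        = @Measure.map (Fin K → Ψ) (Fin K → Ψ)
            (@MeasurableSpace.pi _ _ (fun _ => (⊤ : MeasurableSpace Ψ))) _ id μt := by
      refine Measure.pi_eq (fun s hs => ?_)
      rw [Measure.map_apply hid (MeasurableSet.univ_pi hs), Set.preimage_id, hμt]
      have hsf : ∀ i : Fin K, SigmaFinite ((fun _ : Fin K => @PMF.toMeasure Ψ ⊤ φs) i) :=
        fun i => by
          haveI := @PMF.toMeasure.isProbabilityMeasure Ψ ⊤ φs
          infer_instance
      rw [@Measure.pi_pi (Fin K) (fun _ => Ψ) _ (fun _ => ⊤)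
        (fun _ => @PMF.toMeasure Ψ ⊤ φs) hsf s]
      refine Finset.prod_congr rfl fun i _ => ?_
      have h1 : @PMF.toMeasure Ψ ⊤ φs (s i) = ∑' (y : Ψ), (s i).indicator (⇑φs) y :=
        @PMF.toMeasure_apply Ψ ⊤ φs (s i) MeasurableSpace.measurableSet_top
      have h2 : φs.toMeasure (s i) = ∑' (y : Ψ), (s i).indicator (⇑φs) y :=
        PMF.toMeasure_apply φs (hs i)
      exact h1.trans h2.symm
    rw [key, integral_map hid.aemeasurable (by rw [← key]; exact hInt.aestronglyMeasurable)]
    exact @core T Ψ _ _ ⊤ htopSing χ hχ0 hχ1 φs φ1 hφs f N hN hf0 hfN hBdd C hC K hKpos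
  · rw [integral_undef hInt]
    have hC0 : 0 ≤ C :=
      hC ▸ Real.iSup_nonneg fun g => div_nonneg ENNReal.toReal_nonneg ENNReal.toReal_nonneg
    exact div_nonneg (mul_nonneg hC0 hN.le) (Real.sqrt_nonneg _)
end

section
/- Let V be a finite type and f : Finset V → ℝ submodular. Then for all X, S ⊆ V: f(S) ≤ f(X) − Σ_{v∈X\S} (f(X) − f(X \ {v})) + Σ_{v∈S\X} (f((X ∩ S) ∪ {v}) − f(X ∩ S)), and this upper bound equals f(X) when S = X. -/
/-- A set function `f : Finset V → ℝ` is submodular if adding an element to a smaller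
set gains at least as much as adding it to a larger set:
`f(A ∪ {v}) − f(A) ≥ f(B ∪ {v}) − f(B)` for all `A ⊆ B` and `v ∉ B`. -/
def Submodular {V : Type*} [DecidableEq V] (f : Finset V → ℝ) : Prop :=
  ∀ ⦃A B : Finset V⦄, A ⊆ B → ∀ v ∉ B,
    f (insert v B) - f B ≤ f (insert v A) - f A

/-- The upper bound
`f(X) − Σ_{v∈X\S} (f(X) − f(X \ {v})) + Σ_{v∈S\X} (f((X ∩ S) ∪ {v}) − f(X ∩ S))`. -/
noncomputable def submodUB {V : Type*} [DecidableEq V] (f : Finset V → ℝ)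
    (X S : Finset V) : ℝ :=
  f X - ∑ v ∈ X \ S, (f X - f (X.erase v))
      + ∑ v ∈ S \ X, (f (insert v (X ∩ S)) - f (X ∩ S))

theorem stmt_7 {V : Type*} [Fintype V] [DecidableEq V]
    (f : Finset V → ℝ) (hf : Submodular f) :
    (∀ X S : Finset V, f S ≤ submodUB f X S) ∧
    (∀ X : Finset V, submodUB f X X = f X) := by
  have lem1 : ∀ (X A : Finset V), A ⊆ X →
      f (X \ A) ≤ f X - ∑ v ∈ A, (f X - f (X.erase v)) := by
    intro X A
    induction A using Finset.induction_on with
    | empty => simp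
    | @insert a A ha ih =>
      
      intro hsub
      have haX : a ∈ X := hsub (Finset.mem_insert_self a A)
      have hAX : A ⊆ X := (Finset.insert_subset_iff.mp hsub).2
      rw [Finset.sum_insert ha]
      have hXiA : X \ insert a A = (X \ A).erase a := by
        ext x
        simp [Finset.mem_sdiff, Finset.mem_erase, Finset.mem_insert]
        tauto
      have hsub' : (X \ A).erase a ⊆ X.erase a :=
        Finset.erase_subset_erase a Finset.sdiff_subset
      have hna : a ∉ X.erase a := Finset.notMem_erase a X
      have key := hf hsub' a hna
      rw [Finset.insert_erase haX,
          Finset.insert_erase (Finset.mem_sdiff.mpr ⟨haX, ha⟩)] at key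
      have ihA := ih hAX
      rw [hXiA]
      linarith
  have lem2 : ∀ (T B : Finset V), Disjoint T B →
      f (T ∪ B) ≤ f T + ∑ v ∈ B, (f (insert v T) - f T) := by
    intro T B
    induction B using Finset.induction_on with
    | empty => simp
    | @insert b B hb ih =>
      
      intro hdisj
      have hbT : b ∉ T := by
        intro h
        exact (Finset.disjoint_left.mp hdisj h) (Finset.mem_insert_self b B)
      have hdisj' : Disjoint T B :=
        hdisj.mono_right (Finset.subset_insert b B)
      have hbTB : b ∉ T ∪ B := by
        simp [hbT, hb]
      have key := hf (Finset.subset_union_left (s₁ := T) (s₂ := B)) b hbTB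
      have ihB := ih hdisj'
      rw [Finset.sum_insert hb, Finset.union_insert]
      linarith
  constructor
  · intro X S
    have h1 := lem1 X (X \ S) Finset.sdiff_subset
    rw [sdiff_sdiff_right_self] at h1
    have h2 := lem2 (X ∩ S) (S \ X) (by
      apply Finset.disjoint_left.mpr
      intro x hx hx'
      exact (Finset.mem_sdiff.mp hx').2 (Finset.mem_inter.mp hx).1)
    have hunion : (X ∩ S) ∪ (S \ X) = S := by
      ext x
      simp [Finset.mem_union, Finset.mem_inter, Finset.mem_sdiff]
      tauto
    rw [hunion] at h2
    unfold submodUB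
    rw [show (X ⊓ S : Finset V) = X ∩ S from rfl] at h1
    linarith [h1, h2]
  · intro X
    simp [submodUB]
end

section
/- Let V be a finite type and f : Finset V → ℝ submodular. Fix X ⊆ V and define the modular function m_X(S) := f(X) − Σ_{v∈X\S} (f(X) − f(X \ {v})) + Σ_{v∈S\X} (f({v}) − f(∅)). Then m_X(S) ≥ f(S) for every S ⊆ V, and m_X(X) = f(X). -/
/-- The modular upper bound of `f` tight at `X`:
`m_X(S) = f(X) − Σ_{v∈X\S} (f(X) − f(X \ {v})) + Σ_{v∈S\X} (f({v}) − f(∅))`. -/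
noncomputable def modularUB {V : Type*} [DecidableEq V] (f : Finset V → ℝ)
    (X S : Finset V) : ℝ :=
  f X - ∑ v ∈ X \ S, (f X - f (X.erase v)) + ∑ v ∈ S \ X, (f {v} - f ∅)

lemma aux_erase {V : Type*} [DecidableEq V] (f : Finset V → ℝ) (hf : Submodular f)
    (X : Finset V) : ∀ D : Finset V, D ⊆ X →
    f (X \ D) ≤ f X - ∑ v ∈ D, (f X - f (X.erase v)) := by
  intro D
  induction D using Finset.induction_on with
  | empty => simp
  | @insert a D ha ih =>
    intro hsub
    have haX : a ∈ X := hsub (Finset.mem_insert_self a D)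
    have hDX : D ⊆ X := (Finset.insert_subset_iff.mp hsub).2
    have haXD : a ∈ X \ D := Finset.mem_sdiff.mpr ⟨haX, ha⟩
    have hAB : (X \ D).erase a ⊆ X.erase a :=
      Finset.erase_subset_erase a (Finset.sdiff_subset)
    have hkey := hf hAB a (Finset.notMem_erase a X)
    rw [Finset.insert_erase haX, Finset.insert_erase haXD] at hkey
    have hXiD : X \ insert a D = (X \ D).erase a := by
      ext x; simp [Finset.mem_sdiff, Finset.mem_erase, and_comm, and_left_comm,
        not_or, and_assoc]
    rw [Finset.sum_insert ha, hXiD]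
    have := ih hDX
    linarith

lemma aux_add {V : Type*} [DecidableEq V] (f : Finset V → ℝ) (hf : Submodular f) :
    ∀ E T : Finset V, Disjoint T E →
    f (T ∪ E) ≤ f T + ∑ v ∈ E, (f {v} - f ∅) := by
  intro E
  induction E using Finset.induction_on with
  | empty => simp
  | @insert a E ha ih =>
    intro T hdisj
    have hdisj' : Disjoint T E := hdisj.mono_right (Finset.subset_insert a E)
    have haTE : a ∉ T ∪ E := by
      simp only [Finset.mem_union, not_or]
      exact ⟨Finset.disjoint_right.mp hdisj (Finset.mem_insert_self a E), ha⟩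
    have hkey := hf (Finset.empty_subset (T ∪ E)) a haTE
    have hTE : T ∪ insert a E = insert a (T ∪ E) := by
      ext x; simp [or_comm, or_left_comm]
    rw [hTE, Finset.sum_insert ha]
    have := ih T hdisj'
    simp only [Finset.insert_empty] at hkey
    linarith

theorem stmt_8 {V : Type*} [Fintype V] [DecidableEq V]
    (f : Finset V → ℝ) (hf : Submodular f) (X : Finset V) :
    (∀ S : Finset V, f S ≤ modularUB f X S) ∧ modularUB f X X = f X := by
  constructor
  · intro S
    have h1 := aux_erase f hf X (X \ S) Finset.sdiff_subset
    have h2 := aux_add f hf (S \ X) (S ∩ X)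
      (Finset.disjoint_left.mpr (fun x hx hx2 => (Finset.mem_sdiff.mp hx2).2
        (Finset.mem_inter.mp hx).2))
    have hS : (S ∩ X) ∪ (S \ X) = S := by
      ext x; simp only [Finset.mem_union, Finset.mem_inter, Finset.mem_sdiff]; tauto
    have hXX : X \ (X \ S) = S ∩ X := by
      ext x; simp only [Finset.mem_sdiff, Finset.mem_inter, not_and, not_not]; tauto
    rw [hS] at h2
    rw [hXX] at h1
    unfold modularUB
    linarith
  · unfold modularUB
    simp
end

section
/- Let V be a finite type with |V| = n, let f : Finset V → ℝ be submodular with f(∅) = 0, and let σ : Fin n ≃ V be a bijection (a linear order on V). For 0 ≤ i ≤ n let S_i := {σ(0),…,σ(i−1)} be the i-th prefix (S_0 = ∅), and define Δ_σ(σ(i)) := f(S_{i+1}) − f(S_i). Then the modular function h_σ(S) := Σ_{v∈S} Δ_σ(v) satisfies h_σ(S) ≤ f(S) for every S ⊆ V, and h_σ(S_i) = f(S_i) for every prefix S_i. In particular, for each X ⊆ V there is a modular lower bound of f that is tight at X (take any σ whose first |X| elements are X). -/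
def prefixSet {V : Type*} [DecidableEq V] {n : ℕ} (σ : Fin n ≃ V) (i : ℕ) : Finset V :=
  (Finset.univ.filter fun j : Fin n => (j : ℕ) < i).image σ

noncomputable def prefixGain {V : Type*} [DecidableEq V] {n : ℕ} (σ : Fin n ≃ V)
    (f : Finset V → ℝ) (v : V) : ℝ :=
  f (prefixSet σ ((σ.symm v : ℕ) + 1)) - f (prefixSet σ (σ.symm v : ℕ))

noncomputable def modularLB {V : Type*} [DecidableEq V] {n : ℕ} (σ : Fin n ≃ V)
    (f : Finset V → ℝ) (S : Finset V) : ℝ :=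
  ∑ v ∈ S, prefixGain σ f v

lemma mem_prefixSet {V : Type*} [DecidableEq V] {n : ℕ} (σ : Fin n ≃ V) (i : ℕ) (v : V) :
    v ∈ prefixSet σ i ↔ (σ.symm v : ℕ) < i := by
  simp only [prefixSet, Finset.mem_image, Finset.mem_filter, Finset.mem_univ, true_and]
  constructor
  · rintro ⟨j, hj, rfl⟩; simpa using hj
  · intro h; exact ⟨σ.symm v, h, σ.apply_symm_apply v⟩

lemma prefixSet_zero {V : Type*} [DecidableEq V] {n : ℕ} (σ : Fin n ≃ V) :
    prefixSet σ 0 = ∅ := by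
  ext v; simp [mem_prefixSet]

lemma prefixSet_succ {V : Type*} [DecidableEq V] {n : ℕ} (σ : Fin n ≃ V) (i : ℕ) (h : i < n) :
    prefixSet σ (i + 1) = insert (σ ⟨i, h⟩) (prefixSet σ i) := by
  ext v
  simp only [mem_prefixSet, Finset.mem_insert]
  constructor
  · intro hv
    rcases Nat.lt_succ_iff_lt_or_eq.mp hv with hlt | heq
    · exact Or.inr hlt
    · left
      have : σ.symm v = ⟨i, h⟩ := Fin.ext heq
      rw [← this, σ.apply_symm_apply]
  · rintro (rfl | hlt)
    · simp [σ.symm_apply_apply]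
    · exact Nat.lt_succ_of_lt hlt

lemma notMem_prefixSet_self {V : Type*} [DecidableEq V] {n : ℕ} (σ : Fin n ≃ V) (i : ℕ)
    (h : i < n) : σ ⟨i, h⟩ ∉ prefixSet σ i := by
  simp [mem_prefixSet, σ.symm_apply_apply]

lemma prefixSet_last {V : Type*} [Fintype V] [DecidableEq V] (σ : Fin (Fintype.card V) ≃ V) :
    prefixSet σ (Fintype.card V) = Finset.univ := by
  ext v; simp [mem_prefixSet, Fin.is_lt]

lemma tight {V : Type*} [DecidableEq V] {n : ℕ} (σ : Fin n ≃ V) (f : Finset V → ℝ)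
    (hf0 : f ∅ = 0) : ∀ i ≤ n, modularLB σ f (prefixSet σ i) = f (prefixSet σ i) := by
  intro i
  induction i with
  | zero => intro _; simp [modularLB, prefixSet_zero, hf0]
  | succ i ih =>
    intro hi
    have h : i < n := hi
    rw [prefixSet_succ σ i h, modularLB, Finset.sum_insert (notMem_prefixSet_self σ i h)]
    have := ih (le_of_lt h)
    rw [modularLB] at this
    rw [this, prefixGain, σ.symm_apply_apply]
    simp only []
    rw [prefixSet_succ σ i h]
    ring

lemma lower {V : Type*} [Fintype V] [DecidableEq V] (σ : Fin (Fintype.card V) ≃ V)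
    (f : Finset V → ℝ) (hf : Submodular f) (hf0 : f ∅ = 0) :
    ∀ S : Finset V, modularLB σ f S ≤ f S := by
  intro S
  have key : ∀ i ≤ Fintype.card V,
      modularLB σ f (S ∩ prefixSet σ i) ≤ f (S ∩ prefixSet σ i) := by
    intro i
    induction i with
    | zero => intro _; simp [modularLB, prefixSet_zero, hf0]
    | succ i ih =>
      intro hi
      have h : i < Fintype.card V := hi
      set v := σ ⟨i, h⟩ with hv
      rw [prefixSet_succ σ i h]
      by_cases hvS : v ∈ S
      · rw [Finset.inter_insert_of_mem hvS]
        have hvni : v ∉ S ∩ prefixSet σ i :=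
          fun hmem => notMem_prefixSet_self σ i h (Finset.mem_of_mem_inter_right hmem)
        rw [modularLB, Finset.sum_insert hvni]
        have hgain : prefixGain σ f v ≤ f (insert v (S ∩ prefixSet σ i)) - f (S ∩ prefixSet σ i) := by
          have hsub : S ∩ prefixSet σ i ⊆ prefixSet σ i := Finset.inter_subset_right
          have := hf hsub v (notMem_prefixSet_self σ i h)
          rw [prefixGain, hv, σ.symm_apply_apply]
          simp only []
          rw [prefixSet_succ σ i h]
          exact this
        have := ih (le_of_lt h)
        rw [modularLB] at this
        linarith
      · rw [Finset.inter_insert_of_notMem hvS]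
        exact ih (le_of_lt h)
  have := key (Fintype.card V) le_rfl
  rwa [prefixSet_last, Finset.inter_univ] at this

theorem stmt_9 {V : Type*} [Fintype V] [DecidableEq V]
    (f : Finset V → ℝ) (hf : Submodular f) (hf0 : f ∅ = 0)
    (σ : Fin (Fintype.card V) ≃ V) :
    (∀ S : Finset V, modularLB σ f S ≤ f S) ∧
    (∀ i ≤ Fintype.card V, modularLB σ f (prefixSet σ i) = f (prefixSet σ i)) ∧
    (∀ X : Finset V, ∃ σ' : Fin (Fintype.card V) ≃ V,
      prefixSet σ' X.card = X ∧
      (∀ S : Finset V, modularLB σ' f S ≤ f S) ∧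
      modularLB σ' f X = f X) := by
  refine ⟨lower σ f hf hf0, tight σ f hf0, ?_⟩
  intro X
  set n := Fintype.card V with hn
  set k := X.card with hk
  have hkn : k ≤ n := Finset.card_le_univ X
  have hc : n - k = Xᶜ.card := by
    rw [Finset.card_compl]
  have hsum : n = k + (n - k) := by omega
  let e1 : Fin k ≃ ↥X := X.equivFin.symm
  let e2 : Fin (n - k) ≃ ↥(Xᶜ) := (finCongr hc).trans Xᶜ.equivFin.symm
  let e3 : ↥(Xᶜ) ≃ {a // a ∉ X} := Equiv.subtypeEquivRight (fun a => Finset.mem_compl)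
  let σ' : Fin n ≃ V :=
    ((finCongr hsum).trans finSumFinEquiv.symm).trans
      (((e1.sumCongr (e2.trans e3))).trans (Equiv.sumCompl (· ∈ X)))
  have hmem : ∀ j : Fin n, σ' j ∈ X ↔ (j : ℕ) < k := by
    intro j
    by_cases hj : (j : ℕ) < k
    · have : (finCongr hsum) j = Fin.castAdd (n - k) ⟨j, hj⟩ := by
        ext; simp
      simp only [σ', Equiv.trans_apply, this, finSumFinEquiv_symm_apply_castAdd]
      simp [Equiv.sumCompl, hj]
    · have hj' : (j : ℕ) - k < n - k := by omega
      have : (finCongr hsum) j = Fin.natAdd k ⟨(j : ℕ) - k, hj'⟩ := by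
        ext; simp; omega
      simp only [σ', Equiv.trans_apply, this, finSumFinEquiv_symm_apply_natAdd]
      simp only [Equiv.sumCongr_apply, Sum.map_inr, Equiv.sumCompl_apply_inr]
      constructor
      · intro hmem; exact absurd hmem ((e2.trans e3) ⟨(j:ℕ) - k, hj'⟩).2
      · intro h; omega
  have hpre : prefixSet σ' k = X := by
    ext v
    rw [mem_prefixSet]
    have := hmem (σ'.symm v)
    rw [σ'.apply_symm_apply] at this
    exact this.symm
  refine ⟨σ', hpre, lower σ' f hf hf0, ?_⟩
  have := tight σ' f hf0 k hkn
  rwa [hpre] at this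
end
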